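/- Let (𝔞, ⋆, d_t, l) be an Itô *-algebra and let (K, k, i) be a canonical representation: K a complex inner product space spanned by the image of the ℂ-linear map k : 𝔞 → K, and i a ℂ-linear multiplicative map into endomorphisms of K satisfying ⟪k(a), k(b)⟫ = l(a⋆·b) and i(a)(k(b)) = k(a·b) for all a, b. Define the null ideal 𝔦 := {b ∈ 𝔞 : l(b) = 0, and l(b·c) = 0, l(a·b) = 0, l(a·b·c) = 0 for all a, c ∈ 𝔞}. Then for every b ∈ 𝔞 one has (l(b) = 0 and k(b) = 0 and k(b⋆) = 0 and i(b) = 0) if and only if b ∈ 𝔦. In particular, if 𝔦 = {0} then the fundamental representation a ↦ (l(a), k(a), k(a⋆), i(a)) is injective. -/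

import Mathlib

open ComplexOrder in
/-- For a canonical representation `(K, k, i)` of an Itô *-algebra,
an element `b` satisfies `l b = 0`, `k b = 0`, `k (b⋆) = 0`, `i b = 0` precisely when
`b` lies in the null ideal `𝔦`; consequently, if `𝔦 = {0}` then the fundamental
representation `a ↦ (l a, k a, k (a⋆), i a)` is injective (faithful). -/
theorem ito_null_ideal_and_faithfulness
    {A : Type} [AddCommGroup A] [Module ℂ A]
    (m : A →ₗ[ℂ] A →ₗ[ℂ] A) (st : A →ₗ⋆[ℂ] A) (dt : A) (l : A →ₗ[ℂ] ℂ)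
    (hassoc : ∀ a b c : A, m (m a b) c = m a (m b c))
    (hstm : ∀ a b : A, st (m a b) = m (st b) (st a))
    (hstst : ∀ a : A, st (st a) = a)
    (hstdt : st dt = dt)
    (hmdt : ∀ a : A, m a dt = 0)
    (hdtm : ∀ a : A, m dt a = 0)
    (hldt : l dt = 1)
    (hlst : ∀ a : A, l (st a) = starRingEnd ℂ (l a))
    (hlpos : ∀ a : A, 0 ≤ l (m (st a) a))
    {K : Type} [NormedAddCommGroup K] [InnerProductSpace ℂ K]
    (k : A →ₗ[ℂ] K) (i : A →ₗ[ℂ] (K →ₗ[ℂ] K))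
    (hspan : Submodule.span ℂ (Set.range k) = ⊤)
    (hmult : ∀ a b : A, i (m a b) = (i a) ∘ₗ (i b))
    (hinner : ∀ a b : A, (inner ℂ (k a) (k b) : ℂ) = l (m (st a) b))
    (hik : ∀ a b : A, i a (k b) = k (m a b)) :
    (∀ b : A,
      (l b = 0 ∧ k b = 0 ∧ k (st b) = 0 ∧ i b = 0) ↔
      (l b = 0 ∧ ∀ a c : A, l (m b c) = 0 ∧ l (m a b) = 0 ∧ l (m a (m b c)) = 0)) ∧
    ((∀ b : A, (l b = 0 ∧ ∀ a c : A,
        l (m b c) = 0 ∧ l (m a b) = 0 ∧ l (m a (m b c)) = 0) → b = 0) →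
      Function.Injective fun a : A => (l a, k a, k (st a), i a)) := by
  have key : ∀ b : A,
      (l b = 0 ∧ k b = 0 ∧ k (st b) = 0 ∧ i b = 0) ↔
      (l b = 0 ∧ ∀ a c : A, l (m b c) = 0 ∧ l (m a b) = 0 ∧ l (m a (m b c)) = 0) := by
    intro b
    constructor
    · rintro ⟨hl, hkb, hkstb, hib⟩
      refine ⟨hl, fun a c => ⟨?_, ?_, ?_⟩⟩
      · have h := hinner (st b) c
        rw [hstst] at h
        rw [← h, hkstb, inner_zero_left]
      · have h1 : l (m (st b) (st a)) = 0 := by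
          rw [← hinner b (st a), hkb, inner_zero_left]
        have h2 : l (st (m a b)) = 0 := by rw [hstm]; exact h1
        rw [hlst] at h2
        exact (starRingEnd ℂ).injective (by simpa using h2)
      · have h := hinner (st a) (m b c)
        rw [hstst] at h
        rw [← h, ← hik, hib]
        simp
    · rintro ⟨hl, h⟩
      have hkb : k b = 0 := by
        have hz : (inner ℂ (k b) (k b) : ℂ) = 0 := by
          rw [hinner]; exact (h (st b) b).2.1
        exact inner_self_eq_zero.mp hz
      have hkstb : k (st b) = 0 := by
        have hz : (inner ℂ (k (st b)) (k (st b)) : ℂ) = 0 := by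
          rw [hinner, hstst]; exact (h b (st b)).1
        exact inner_self_eq_zero.mp hz
      have hkm : ∀ c, k (m b c) = 0 := by
        intro c
        have hz : (inner ℂ (k (m b c)) (k (m b c)) : ℂ) = 0 := by
          rw [hinner]; exact (h (st (m b c)) c).2.2
        exact inner_self_eq_zero.mp hz
      have hib : i b = 0 := by
        ext x
        have hx : x ∈ Submodule.span ℂ (Set.range k) := hspan ▸ Submodule.mem_top
        induction hx using Submodule.span_induction with
        | mem y hy => obtain ⟨c, rfl⟩ := hy; rw [hik, hkm]; simp
        | zero => simp
        | add y z _ _ hy hz => simp [map_add, hy, hz]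
        | smul r y _ hy => simp [map_smul, hy]
      exact ⟨hl, hkb, hkstb, hib⟩
  refine ⟨key, ?_⟩
  intro hnull a1 a2 heq
  simp only [Prod.mk.injEq] at heq
  obtain ⟨h1, h2, h3, h4⟩ := heq
  have hb : a1 - a2 = 0 := by
    apply hnull
    apply (key (a1 - a2)).mp
    refine ⟨by simp [map_sub, h1], by simp [map_sub, h2], ?_, by simp [map_sub, h4]⟩
    rw [map_sub, map_sub, h3, sub_self]
  exact sub_eq_zero.mp hb
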